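/- Let A be a uogas on a finite set X, let (y,x) ∈ A, and let p be the unique injective s(A)-path from y to the unique maximal element of the connected component of y. Then p has length at least 2 and p(1) = x. -/
import Mathlib


/-- In a uogas on a finite set, if `(y,x) ∈ A` and `p` is the unique
injective path (in the symmetrization) from `y` to the maximal element of its
component, then `p` has length at least 2 and `p 1 = x`. -/
theorem stmt3 {X : Type*} [Finite X] (A : X → X → Prop)
    (hirr : ∀ x, ¬ A x x)
    (hanti : ∀ x y, A x y → A y x → x = y)
    (huo : ∀ x y z, A x y → A x z → y = z)
    (hacyc : ¬ ∃ (n : ℕ) (f : ℕ → X), 2 ≤ n ∧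
      (∀ i j, i ≤ n → j ≤ n → f i = f j → i = j) ∧
      (∀ i, i < n → (A (f i) (f (i+1)) ∨ A (f (i+1)) (f i))) ∧
      (A (f n) (f 0) ∨ A (f 0) (f n)))
    (y x m : X) (hyx : A y x)
    (hm : Relation.ReflTransGen (fun a b => A a b ∨ A b a) y m)
    (hmax : ∀ z, ¬ A m z)
    (p : ℕ → X) (n : ℕ)
    (hp0 : p 0 = y) (hpn : p n = m)
    (hpath : ∀ i, i < n → (A (p i) (p (i+1)) ∨ A (p (i+1)) (p i)))
    (hinj : ∀ i j, i ≤ n → j ≤ n → p i = p j → i = j) :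
    1 ≤ n ∧ p 1 = x := by
  -- n ≥ 1
  have hn1 : 1 ≤ n := by
    rcases Nat.eq_zero_or_pos n with h0 | h
    · exfalso
      have : p 0 = m := by rw [h0] at hpn; exact hpn
      rw [hp0] at this
      exact hmax x (this ▸ hyx)
    · exact h
  -- all edges point forward
  have fwd : ∀ d i, i + d = n - 1 → A (p i) (p (i+1)) := by
    intro d
    induction d with
    | zero =>
      intro i hi
      simp at hi
      subst hi
      have hlt : n - 1 < n := Nat.sub_lt (by omega) one_pos
      rcases hpath (n-1) hlt with h | h
      · exact h
      · exfalso
        have : n - 1 + 1 = n := by omega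
        rw [this, hpn] at h
        exact hmax _ h
    | succ d ih =>
      intro i hi
      have h1 : (i+1) + d = n - 1 := by omega
      have h2 := ih (i+1) h1
      have hlt : i < n := by omega
      rcases hpath i hlt with h | h
      · exact h
      · exfalso
        have heq : p i = p (i+2) := huo (p (i+1)) (p i) (p (i+2)) h h2
        have := hinj i (i+2) (by omega) (by omega) heq
        omega
  refine ⟨hn1, ?_⟩
  have h0 : A (p 0) (p 1) := fwd (n-1) 0 (by omega)
  rw [hp0] at h0
  exact (huo y (p 1) x h0 hyx)
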